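/- Let (Ω, ℱ, P) be a probability space and let (A_k)_{k≥1} be a sequence of events. Let Φ : ℕ → ℕ be non-decreasing with ∑_{k=1}^{Φ(n)} P(A_k) ≥ n for every n ≥ 1. Let L ≥ 0 be an integer and let α⋆ ≥ 0 be such that for every k ≥ 1, every event C in σ(A₁, …, A_k), and every event B in σ(A_j : j ≥ k+L+1), one has |P(C ∩ B) − P(C)·P(B)| ≤ α⋆. Then for all integers n ≥ 1 and i ≥ 0, setting M_{i,n} := Φ(i+n) − i, one has P(⋃_{k=i+1}^{Φ(i+n)} A_k) ≥ 1 − exp(−n/(L+1)) − ⌈M_{i,n}/(L+1)⌉·α⋆. -/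

import Mathlib

open MeasureTheory

private lemma prob_toReal_le_one {Ω : Type*} [MeasurableSpace Ω] (P : Measure Ω)
    [IsProbabilityMeasure P] (s : Set Ω) : (P s).toReal ≤ 1 := by
  have h : P s ≤ 1 := prob_le_one
  calc (P s).toReal ≤ (1 : ENNReal).toReal := ENNReal.toReal_mono (by simp) h
    _ = 1 := by simp

private lemma prob_compl_toReal {Ω : Type*} [MeasurableSpace Ω] (P : Measure Ω)
    [IsProbabilityMeasure P] {s : Set Ω} (hs : MeasurableSet s) :
    (P sᶜ).toReal = 1 - (P s).toReal := by
  rw [prob_compl_eq_one_sub hs, ENNReal.toReal_sub_of_le prob_le_one (by simp)]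
  simp

private lemma chain_bound {Ω : Type*} [MeasurableSpace Ω] (P : Measure Ω)
    [IsProbabilityMeasure P] (A : ℕ → Set Ω) (hA : ∀ k, 1 ≤ k → MeasurableSet (A k))
    (L : ℕ) (αs : ℝ) (hαs : 0 ≤ αs)
    (hmix : ∀ k, 1 ≤ k →
      ∀ C : Set Ω,
        MeasurableSet[MeasurableSpace.generateFrom (A '' Set.Icc 1 k)] C →
      ∀ B : Set Ω,
        MeasurableSet[MeasurableSpace.generateFrom (A '' Set.Ici (k + L + 1))] B →
          |(P (C ∩ B)).toReal - (P C).toReal * (P B).toReal| ≤ αs)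
    (S : Finset ℕ) :
    (∀ k ∈ S, 1 ≤ k) → (∀ j ∈ S, ∀ k ∈ S, j < k → j + L + 1 ≤ k) →
    (P (⋂ k ∈ S, (A k)ᶜ)).toReal ≤
      (∏ k ∈ S, (1 - (P (A k)).toReal)) + S.card * αs := by
  induction S using Finset.induction_on_max with
  | empty => intro _ _; simp
  | insert a s hlt ih =>
    intro h1 hgap
    have has : a ∉ s := fun h => lt_irrefl a (hlt a h)
    have ha1 : 1 ≤ a := h1 a (Finset.mem_insert_self a s)
    have hAa : MeasurableSet (A a) := hA a ha1
    have hpa0 : 0 ≤ (P (A a)).toReal := ENNReal.toReal_nonneg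
    have hpa1 : (P (A a)).toReal ≤ 1 := prob_toReal_le_one P _
    rw [Finset.set_biInter_insert, Finset.prod_insert has,
      Finset.card_insert_of_notMem has]
    rcases s.eq_empty_or_nonempty with rfl | hs
    · have he : ⋂ x ∈ (∅ : Finset ℕ), (A x)ᶜ = Set.univ := by simp
      rw [he, Set.inter_univ, prob_compl_toReal P hAa]
      simp only [Finset.prod_empty, Finset.card_empty, Nat.cast_zero, mul_one]
      push_cast
      nlinarith
    · set m := s.max' hs with hm
      have hms : m ∈ s := s.max'_mem hs
      have hm1 : 1 ≤ m := h1 m (Finset.mem_insert_of_mem hms)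
      have hma : m + L + 1 ≤ a :=
        hgap m (Finset.mem_insert_of_mem hms) a (Finset.mem_insert_self a s) (hlt m hms)
      have hC : MeasurableSet[MeasurableSpace.generateFrom (A '' Set.Icc 1 m)]
          (⋂ k ∈ s, (A k)ᶜ) := by
        refine Finset.measurableSet_biInter s (fun k hk => ?_)
        have hkmem : A k ∈ A '' Set.Icc 1 m :=
          ⟨k, ⟨h1 k (Finset.mem_insert_of_mem hk), s.le_max' k hk⟩, rfl⟩
        exact (MeasurableSpace.measurableSet_generateFrom hkmem).compl
      have hB : MeasurableSet[MeasurableSpace.generateFrom (A '' Set.Ici (m + L + 1))]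
          ((A a)ᶜ) := by
        have hamem : A a ∈ A '' Set.Ici (m + L + 1) := ⟨a, hma, rfl⟩
        exact (MeasurableSpace.measurableSet_generateFrom hamem).compl
      have hmx := hmix m hm1 _ hC _ hB
      have hIH := ih (fun k hk => h1 k (Finset.mem_insert_of_mem hk))
        (fun j hj k hk hjk => hgap j (Finset.mem_insert_of_mem hj)
          k (Finset.mem_insert_of_mem hk) hjk)
      rw [abs_le] at hmx
      have hcomm : (A a)ᶜ ∩ ⋂ k ∈ s, (A k)ᶜ = (⋂ k ∈ s, (A k)ᶜ) ∩ (A a)ᶜ :=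
        Set.inter_comm _ _
      rw [hcomm]
      have hBc : (P (A a)ᶜ).toReal = 1 - (P (A a)).toReal := prob_compl_toReal P hAa
      have hPC0 : 0 ≤ (P (⋂ k ∈ s, (A k)ᶜ)).toReal := ENNReal.toReal_nonneg
      have hcard0 : (0:ℝ) ≤ (s.card : ℝ) := Nat.cast_nonneg _
      have key : (P ((⋂ k ∈ s, (A k)ᶜ) ∩ (A a)ᶜ)).toReal ≤
          (P (⋂ k ∈ s, (A k)ᶜ)).toReal * (1 - (P (A a)).toReal) + αs := by
        have := hmx.2
        rw [hBc] at this
        linarith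
      have step2 : (P (⋂ k ∈ s, (A k)ᶜ)).toReal * (1 - (P (A a)).toReal) ≤
          ((∏ k ∈ s, (1 - (P (A k)).toReal)) + s.card * αs) * (1 - (P (A a)).toReal) :=
        mul_le_mul_of_nonneg_right hIH (by linarith)
      have expand : ((∏ k ∈ s, (1 - (P (A k)).toReal)) + s.card * αs) *
            (1 - (P (A a)).toReal) ≤
          (1 - (P (A a)).toReal) * (∏ k ∈ s, (1 - (P (A k)).toReal)) + s.card * αs := by
        nlinarith [mul_nonneg (mul_nonneg hcard0 hαs) hpa0]
      push_cast
      linarith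

/-- Corollary (finite-window rate form, α-mixing case): if `Φ` is non-decreasing with
`∑_{k=1}^{Φ n} P(A k) ≥ n` for all `n ≥ 1` and the sequence is α-mixing at lag `L + 1`
with coefficient at most `αs`, then for `n ≥ 1`, `i ≥ 0`, with `M = Φ(i+n) − i`,
`P(⋃_{k=i+1}^{Φ(i+n)} A k) ≥ 1 − exp(−n/(L+1)) − ⌈M/(L+1)⌉·αs`. -/
theorem alpha_mixing_window_bound
    {Ω : Type*} [MeasurableSpace Ω] (P : Measure Ω) [IsProbabilityMeasure P]
    (A : ℕ → Set Ω) (hA : ∀ k, 1 ≤ k → MeasurableSet (A k))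
    (Φ : ℕ → ℕ) (hΦ : Monotone Φ)
    (hmass : ∀ n : ℕ, 1 ≤ n → (n : ℝ) ≤ ∑ k ∈ Finset.Icc 1 (Φ n), (P (A k)).toReal)
    (L : ℕ) (αs : ℝ) (hαs : 0 ≤ αs)
    (hmix : ∀ k, 1 ≤ k →
      ∀ C : Set Ω,
        MeasurableSet[MeasurableSpace.generateFrom (A '' Set.Icc 1 k)] C →
      ∀ B : Set Ω,
        MeasurableSet[MeasurableSpace.generateFrom (A '' Set.Ici (k + L + 1))] B →
          |(P (C ∩ B)).toReal - (P C).toReal * (P B).toReal| ≤ αs) :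
    ∀ n : ℕ, 1 ≤ n → ∀ i : ℕ,
      1 - Real.exp (-(n : ℝ) / ((L : ℝ) + 1)) -
          (⌈((Φ (i + n) - i : ℕ) : ℝ) / ((L : ℝ) + 1)⌉₊ : ℝ) * αs ≤
        (P (⋃ k ∈ Finset.Icc (i + 1) (Φ (i + n)), A k)).toReal := by
  intro n hn i
  classical
  set N := Φ (i + n) with hNdef
  set M := N - i with hMdef
  set p : ℕ → ℝ := fun k => (P (A k)).toReal with hp
  have hp0 : ∀ k, 0 ≤ p k := fun k => ENNReal.toReal_nonneg
  have hp1 : ∀ k, p k ≤ 1 := fun k => prob_toReal_le_one P _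
  have hin1 : 1 ≤ i + n := le_add_of_nonneg_of_le (Nat.zero_le i) hn
  have hmassN : ((i + n : ℕ) : ℝ) ≤ ∑ k ∈ Finset.Icc 1 N, p k := hmass (i + n) hin1
  -- N ≥ i + n
  have hsum_le_card : ∑ k ∈ Finset.Icc 1 N, p k ≤ (N : ℝ) := by
    calc ∑ k ∈ Finset.Icc 1 N, p k ≤ ∑ k ∈ Finset.Icc 1 N, (1:ℝ) :=
          Finset.sum_le_sum (fun k _ => hp1 k)
      _ = ((Finset.Icc 1 N).card : ℝ) := by simp
      _ = (N : ℝ) := by simp [Nat.card_Icc]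
  have hiN : i + n ≤ N := by
    have : ((i + n : ℕ) : ℝ) ≤ (N : ℝ) := le_trans hmassN hsum_le_card
    exact_mod_cast this
  have hiN' : i ≤ N := le_trans (Nat.le_add_right i n) hiN
  have hNM : N = i + M := by omega
  have hM1 : 1 ≤ M := by omega
  -- window sum ≥ n
  have hsplit : (∑ k ∈ Finset.Icc 1 i, p k) + ∑ k ∈ Finset.Icc (i+1) N, p k
      = ∑ k ∈ Finset.Icc 1 N, p k := by
    rw [show Finset.Icc 1 i = Finset.Ioc 0 i by rw [← Finset.Icc_add_one_left_eq_Ioc]; rfl,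
        show Finset.Icc (i+1) N = Finset.Ioc i N by rw [← Finset.Icc_add_one_left_eq_Ioc],
        show Finset.Icc 1 N = Finset.Ioc 0 N by rw [← Finset.Icc_add_one_left_eq_Ioc]; rfl]
    exact Finset.sum_Ioc_consecutive _ (Nat.zero_le i) hiN'
  have hIcc1i : ∑ k ∈ Finset.Icc 1 i, p k ≤ (i : ℝ) := by
    calc ∑ k ∈ Finset.Icc 1 i, p k ≤ ∑ k ∈ Finset.Icc 1 i, (1:ℝ) :=
          Finset.sum_le_sum (fun k _ => hp1 k)
      _ = ((Finset.Icc 1 i).card : ℝ) := by simp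
      _ = (i : ℝ) := by simp [Nat.card_Icc]
  have hwin : (n : ℝ) ≤ ∑ k ∈ Finset.Icc (i+1) N, p k := by
    have := hmassN
    push_cast at this
    linarith [hsplit, hIcc1i]
  -- residue classes
  set T := Finset.Icc (i+1) N with hT
  set S : ℕ → Finset ℕ := fun r => T.filter (fun k => (k - (i+1)) % (L+1) = r) with hS
  have hfiber : ∑ r ∈ Finset.range (L+1), ∑ k ∈ S r, p k = ∑ k ∈ T, p k := by
    exact Finset.sum_fiberwise_of_maps_to
      (fun k _ => Finset.mem_range.mpr (Nat.mod_lt _ (Nat.succ_pos L))) p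
  -- pigeonhole
  have hex : ∃ r ∈ Finset.range (L+1), (n : ℝ) / ((L:ℝ)+1) ≤ ∑ k ∈ S r, p k := by
    by_contra h
    push_neg at h
    have hlt : ∑ r ∈ Finset.range (L+1), ∑ k ∈ S r, p k
        < ∑ r ∈ Finset.range (L+1), (n : ℝ) / ((L:ℝ)+1) :=
      Finset.sum_lt_sum_of_nonempty ⟨0, Finset.mem_range.mpr (Nat.succ_pos L)⟩
        (fun r hr => h r hr)
    rw [Finset.sum_const, Finset.card_range] at hlt
    have hL1 : ((L:ℝ)+1) ≠ 0 := by positivity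
    rw [nsmul_eq_mul] at hlt
    push_cast at hlt
    rw [mul_div_cancel₀ _ hL1] at hlt
    rw [hfiber] at hlt
    linarith
  obtain ⟨r, hr, hclass⟩ := hex
  -- properties of S r
  have hmemS : ∀ k ∈ S r, i + 1 ≤ k ∧ k ≤ N := by
    intro k hk
    have := (Finset.mem_filter.mp hk).1
    exact Finset.mem_Icc.mp this
  have h1S : ∀ k ∈ S r, 1 ≤ k := fun k hk => le_trans (Nat.le_add_left 1 i) (hmemS k hk).1
  have hgapS : ∀ j ∈ S r, ∀ k ∈ S r, j < k → j + L + 1 ≤ k := by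
    intro j hj k hk hjk
    have hjm := (Finset.mem_filter.mp hj).2
    have hkm := (Finset.mem_filter.mp hk).2
    have hji := (hmemS j hj).1
    have hki := (hmemS k hk).1
    set a := j - (i+1) with hadef
    set b := k - (i+1) with hbdef
    have hab : a ≤ b := by omega
    have hmod : a ≡ b [MOD L+1] := by
      unfold Nat.ModEq; rw [hjm, hkm]
    have hdvd : (L+1) ∣ b - a := (Nat.modEq_iff_dvd' hab).mp hmod
    have hba : 0 < b - a := by omega
    have := Nat.le_of_dvd hba hdvd
    omega
  -- cardinality bound
  have hceilM : (M : ℕ) ≤ ⌈(M : ℝ) / ((L:ℝ)+1)⌉₊ * (L+1) := by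
    have h1 : (M : ℝ) / ((L:ℝ)+1) ≤ (⌈(M : ℝ) / ((L:ℝ)+1)⌉₊ : ℝ) := Nat.le_ceil _
    have hpos : (0:ℝ) < (L:ℝ)+1 := by positivity
    have h2 : (M : ℝ) ≤ (⌈(M : ℝ) / ((L:ℝ)+1)⌉₊ : ℝ) * ((L:ℝ)+1) :=
      (div_le_iff₀ hpos).mp h1
    have h3 : (M : ℝ) ≤ ((⌈(M : ℝ) / ((L:ℝ)+1)⌉₊ * (L+1) : ℕ) : ℝ) := by push_cast; linarith
    exact_mod_cast h3
  have hcardS : (S r).card ≤ ⌈(M : ℝ) / ((L:ℝ)+1)⌉₊ := by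
    set c := ⌈(M : ℝ) / ((L:ℝ)+1)⌉₊ with hc
    have hinj : ∀ k ∈ S r, (k - (i+1)) / (L+1) ∈ Finset.range c := by
      intro k hk
      obtain ⟨hk1, hk2⟩ := hmemS k hk
      have hkM : k - (i+1) ≤ M - 1 := by omega
      have : (k - (i+1)) / (L+1) ≤ (M - 1) / (L+1) := Nat.div_le_div_right hkM
      refine Finset.mem_range.mpr ?_
      have hd : (M - 1) / (L+1) < c := by
        by_contra hcon
        push_neg at hcon
        have : c * (L+1) ≤ ((M-1)/(L+1)) * (L+1) := Nat.mul_le_mul_right _ hcon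
        have hdm : ((M-1)/(L+1)) * (L+1) ≤ M - 1 := Nat.div_mul_le_self _ _
        omega
      omega
    refine le_trans (Finset.card_le_card_of_injOn
      (fun k => (k - (i+1)) / (L+1)) hinj ?_) (by simp)
    intro k1 hk1 k2 hk2 heq
    rw [Finset.mem_coe] at hk1 hk2
    have hm1 := (Finset.mem_filter.mp hk1).2
    have hm2 := (Finset.mem_filter.mp hk2).2
    have hi1 := (hmemS k1 hk1).1
    have hi2 := (hmemS k2 hk2).1
    have e1 := Nat.div_add_mod (k1 - (i+1)) (L+1)
    have e2 := Nat.div_add_mod (k2 - (i+1)) (L+1)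
    dsimp only at heq
    rw [heq] at e1
    rw [hm1] at e1
    rw [hm2] at e2
    omega
  -- chain bound
  have hchain := chain_bound P A hA L αs hαs hmix (S r) h1S hgapS
  -- product ≤ exp
  have hprodexp : (∏ k ∈ S r, (1 - p k)) ≤ Real.exp (-(∑ k ∈ S r, p k)) := by
    calc (∏ k ∈ S r, (1 - p k)) ≤ ∏ k ∈ S r, Real.exp (-(p k)) := by
          refine Finset.prod_le_prod (fun k _ => by linarith [hp1 k]) (fun k _ => ?_)
          have := Real.add_one_le_exp (-(p k))
          linarith
      _ = Real.exp (∑ k ∈ S r, -(p k)) := (Real.exp_sum _ _).symm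
      _ = Real.exp (-(∑ k ∈ S r, p k)) := by rw [← Finset.sum_neg_distrib]
  have hexpmono : Real.exp (-(∑ k ∈ S r, p k)) ≤ Real.exp (-(n:ℝ) / ((L:ℝ)+1)) := by
    rw [neg_div]
    exact Real.exp_le_exp.mpr (neg_le_neg hclass)
  -- measurability of the union
  have hU : MeasurableSet (⋃ k ∈ S r, A k) :=
    Finset.measurableSet_biUnion _ (fun k hk => hA k (h1S k hk))
  have hcompl : (⋃ k ∈ S r, A k)ᶜ = ⋂ k ∈ S r, (A k)ᶜ := by
    simp [Set.compl_iUnion]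
  have hPU : (P (⋃ k ∈ S r, A k)).toReal
      = 1 - (P (⋂ k ∈ S r, (A k)ᶜ)).toReal := by
    rw [← hcompl, prob_compl_toReal P hU]
    ring
  -- monotonicity
  have hsub : (⋃ k ∈ S r, A k) ⊆ ⋃ k ∈ T, A k := by
    intro x hx
    simp only [Set.mem_iUnion] at hx ⊢
    obtain ⟨k, hk, hxk⟩ := hx
    exact ⟨k, (Finset.mem_filter.mp hk).1, hxk⟩
  have hmono : (P (⋃ k ∈ S r, A k)).toReal ≤ (P (⋃ k ∈ T, A k)).toReal :=
    ENNReal.toReal_mono (measure_ne_top P _) (measure_mono hsub)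
  -- assemble
  have hcardR : ((S r).card : ℝ) * αs ≤ (⌈(M : ℝ) / ((L:ℝ)+1)⌉₊ : ℝ) * αs := by
    apply mul_le_mul_of_nonneg_right _ hαs
    exact_mod_cast hcardS
  have final : 1 - Real.exp (-(n : ℝ) / ((L : ℝ) + 1)) -
      (⌈(M : ℝ) / ((L : ℝ) + 1)⌉₊ : ℝ) * αs ≤ (P (⋃ k ∈ S r, A k)).toReal := by
    rw [hPU]
    have : (P (⋂ k ∈ S r, (A k)ᶜ)).toReal ≤
        Real.exp (-(n:ℝ) / ((L:ℝ)+1)) + (⌈(M : ℝ) / ((L:ℝ)+1)⌉₊ : ℝ) * αs := by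
      calc (P (⋂ k ∈ S r, (A k)ᶜ)).toReal
          ≤ (∏ k ∈ S r, (1 - p k)) + (S r).card * αs := hchain
        _ ≤ Real.exp (-(n:ℝ) / ((L:ℝ)+1)) + (⌈(M : ℝ) / ((L:ℝ)+1)⌉₊ : ℝ) * αs := by
            have := le_trans hprodexp hexpmono
            linarith
    linarith
  exact le_trans final hmono
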